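/- arXiv:1010.4611 — 4 statements merged into one kernel-verified Lean document; each statement's English description precedes it below -/
import Mathlib

section
/- Let n = 2 with distinct sites x₁, x₂ in ℝᵈ. If two radius tuples (r₁,r₂) and (r₁′,r₂′) produce the same power diagram (both cells equal as sets), then r₁ − r₂ = r₁′ − r₂′. -/
/-- The `i`-th power cell of the power diagram with sites `s` and radii `r`. -/
def powerCell {d n : ℕ} (s : Fin n → EuclideanSpace ℝ (Fin d)) (r : Fin n → ℝ)
    (i : Fin n) : Set (EuclideanSpace ℝ (Fin d)) :=
  {x | ∀ j, ‖x - s i‖ ^ 2 - r i ≤ ‖x - s j‖ ^ 2 - r j}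

lemma mem_cell_line {d : ℕ} (s : Fin 2 → EuclideanSpace ℝ (Fin d)) (r : Fin 2 → ℝ) (t : ℝ) :
    (s 0 + t • (s 1 - s 0)) ∈ powerCell s r 0 ↔
      (2 * t - 1) * ‖s 1 - s 0‖ ^ 2 ≤ r 0 - r 1 := by
  have h0 : s 0 + t • (s 1 - s 0) - s 0 = t • (s 1 - s 0) := by abel
  have h1 : s 0 + t • (s 1 - s 0) - s 1 = (t - 1) • (s 1 - s 0) := by
    rw [sub_smul, one_smul]; abel
  simp only [powerCell, Set.mem_setOf_eq, Fin.forall_fin_two, h0, h1, norm_smul,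
    Real.norm_eq_abs, mul_pow, sq_abs]
  constructor
  · intro hmem
    have := hmem.2
    nlinarith [this]
  · intro hle
    refine ⟨le_refl _, ?_⟩
    nlinarith [hle]

/-- For two distinct sites, the power diagram determines the radii up to a
common shift: if two radius tuples give the same cells then the differences of
the radii coincide. -/
theorem radii_unique_of_powerDiagram_eq {d : ℕ} (s : Fin 2 → EuclideanSpace ℝ (Fin d))
    (hs : s 0 ≠ s 1) (r r' : Fin 2 → ℝ)
    (h : ∀ i, powerCell s r i = powerCell s r' i) :
    r 0 - r 1 = r' 0 - r' 1 := by
  set D : ℝ := ‖s 1 - s 0‖ ^ 2 with hD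
  have hDpos : 0 < D := by
    have hne : s 1 - s 0 ≠ 0 := sub_ne_zero.mpr (Ne.symm hs)
    have := norm_pos_iff.mpr hne
    rw [hD]; positivity
  have key : ∀ a b : Fin 2 → ℝ, powerCell s a 0 = powerCell s b 0 →
      a 0 - a 1 ≤ b 0 - b 1 := by
    intro a b hab
    set t : ℝ := (1 + (a 0 - a 1) / D) / 2 with ht
    have htD : (2 * t - 1) * D = a 0 - a 1 := by
      rw [ht, show 2 * ((1 + (a 0 - a 1) / D) / 2) - 1 = (a 0 - a 1) / D by ring,
        div_mul_cancel₀ _ hDpos.ne']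
    have hmem : (s 0 + t • (s 1 - s 0)) ∈ powerCell s a 0 :=
      (mem_cell_line s a t).mpr (le_of_eq htD)
    rw [hab] at hmem
    have := (mem_cell_line s b t).mp hmem
    linarith [htD ▸ this]
  exact le_antisymm (key r r' (h 0)) (key r' r ((h 0).symm))
end

section
/- For n ≥ 2, the gcd of the binomial coefficients C(n,1), C(n,2), …, C(n,n−1) equals p if n = pᵏ is a prime power, and equals 1 otherwise. -/
open Finset Nat

/-- Key lemma for the non-prime-power case: if `q ∤ m` then
`q ∤ C(q^j * m, q^j)`, by Lucas's theorem. -/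
lemma not_dvd_choose_pow_mul {q j m : ℕ} (hq : q.Prime) (hm : ¬ q ∣ m) :
    ¬ q ∣ (q ^ j * m).choose (q ^ j) := by
  haveI := Fact.mk hq
  have hm0 : m ≠ 0 := by rintro rfl; exact hm (dvd_zero q)
  set n := q ^ j * m with hn
  have hjn : q ^ j ≤ n := Nat.le_mul_of_pos_right _ (Nat.pos_of_ne_zero hm0)
  have hlt : n < q ^ n := (Nat.lt_pow_self hq.one_lt : n < q ^ n)
  have hklt : q ^ j < q ^ n := lt_of_le_of_lt hjn hlt
  have hja : j < n := (Nat.pow_lt_pow_iff_right hq.one_lt).mp hklt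
  have key := Choose.choose_modEq_prod_range_choose_nat (p := q) (n := n)
    (k := q ^ j) (a := n) hlt hklt
  have hprod : (∏ i ∈ Finset.range n, (n / q ^ i % q).choose (q ^ j / q ^ i % q))
      = m % q := by
    rw [Finset.prod_eq_single j]
    · have h1 : n / q ^ j = m := by
        rw [hn, Nat.mul_div_cancel_left _ (pow_pos hq.pos j)]
      have h2 : q ^ j / q ^ j = 1 := Nat.div_self (pow_pos hq.pos j)
      rw [h1, h2, Nat.one_mod_eq_one.mpr hq.one_lt.ne', Nat.choose_one_right]
    · intro i _ hij
      rcases lt_or_gt_of_ne hij with h | h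
      · have h3 : q ^ j / q ^ i = q ^ (j - i) := Nat.pow_div h.le hq.pos
        have hd : q ∣ q ^ (j - i) := dvd_pow_self q (by omega)
        rw [h3, Nat.mod_eq_zero_of_dvd hd, Nat.choose_zero_right]
      · have h3 : q ^ j / q ^ i = 0 :=
          Nat.div_eq_of_lt (Nat.pow_lt_pow_right hq.one_lt h)
        rw [h3, Nat.zero_mod, Nat.choose_zero_right]
    · intro h; exact absurd (Finset.mem_range.mpr hja) h
  rw [hprod] at key
  intro hdvd
  have heq : n.choose (q ^ j) % q = m % q % q := key
  rw [Nat.mod_mod_of_dvd _ dvd_rfl, (Nat.mod_eq_zero_of_dvd hdvd)] at heq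
  exact hm (Nat.dvd_of_mod_eq_zero heq.symm)

/-- For `n ≥ 2`, the gcd of the binomial coefficients `C(n,1), …, C(n,n-1)`
equals `p` when `n = p^k` is a prime power, and equals `1` otherwise. -/
theorem gcd_choose_eq (n : ℕ) (hn : 2 ≤ n) :
    (∀ p k : ℕ, p.Prime → 1 ≤ k → n = p ^ k →
      (Finset.Icc 1 (n - 1)).gcd n.choose = p) ∧
    (¬ IsPrimePow n → (Finset.Icc 1 (n - 1)).gcd n.choose = 1) := by
  have hn0 : n ≠ 0 := by omega
  have h1mem : 1 ∈ Finset.Icc 1 (n - 1) := Finset.mem_Icc.mpr ⟨le_refl 1, by omega⟩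
  have hgdvdn : (Finset.Icc 1 (n - 1)).gcd n.choose ∣ n := by
    have := Finset.gcd_dvd (f := n.choose) h1mem
    rwa [Nat.choose_one_right] at this
  constructor
  · rintro p k hp hk rfl
    set g := (Finset.Icc 1 (p ^ k - 1)).gcd (p ^ k).choose with hg
    -- p divides g
    have hpg : p ∣ g := by
      apply Finset.dvd_gcd
      intro i hi
      rw [Finset.mem_Icc] at hi
      exact Nat.Prime.dvd_choose_pow hp (by omega) (by omega)
    -- g = p ^ e for some e ≤ k
    obtain ⟨e, hek, hge⟩ := (Nat.dvd_prime_pow hp).mp hgdvdn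
    -- p^2 does not divide choose (p^k) (p^(k-1))
    have hmem : p ^ (k - 1) ∈ Finset.Icc 1 (p ^ k - 1) := by
      rw [Finset.mem_Icc]
      have : p ^ (k - 1) < p ^ k := Nat.pow_lt_pow_right hp.one_lt (by omega)
      constructor
      · exact Nat.one_le_iff_ne_zero.mpr (pow_ne_zero _ hp.pos.ne')
      · omega
    have hgdvd : g ∣ (p ^ k).choose (p ^ (k - 1)) := Finset.gcd_dvd hmem
    have hemult : emultiplicity p ((p ^ k).choose (p ^ (k - 1))) = (1 : ℕ) := by
      rw [Nat.Prime.emultiplicity_choose_prime_pow hp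
        (Nat.pow_le_pow_right hp.pos (by omega)) (pow_ne_zero _ hp.pos.ne'),
        multiplicity_pow_self_of_prime hp.prime]
      congr 1
      omega
    have hnot : ¬ p ^ 2 ∣ (p ^ k).choose (p ^ (k - 1)) := by
      apply not_pow_dvd_of_emultiplicity_lt
      rw [hemult]
      exact_mod_cast Nat.one_lt_two
    have he1 : e = 1 := by
      rcases Nat.lt_or_ge e 1 with h | h
      · interval_cases e
        simp at hge
        rw [hge] at hpg
        exact absurd (Nat.le_of_dvd one_pos hpg) (by have := hp.two_le; omega)
      rcases Nat.lt_or_ge e 2 with h2 | h2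
      · omega
      · exfalso
        apply hnot
        calc p ^ 2 ∣ p ^ e := pow_dvd_pow p h2
          _ ∣ _ := hge ▸ hgdvd
    rw [hge, he1, pow_one]
  · intro hnp
    rw [Nat.eq_one_iff_not_exists_prime_dvd]
    intro q hq hqg
    have hqn : q ∣ n := hqg.trans hgdvdn
    set j := n.factorization q with hj
    have hj1 : 1 ≤ j := hq.factorization_pos_of_dvd hn0 hqn
    have hproj : q ^ j ∣ n := Nat.ordProj_dvd n q
    have hcompl : ¬ q ∣ n / q ^ j := Nat.not_dvd_ordCompl hq hn0
    have hself : q ^ j * (n / q ^ j) = n := Nat.ordProj_mul_ordCompl_eq_self n q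
    have hne : q ^ j ≠ n := by
      rintro heq
      exact hnp ⟨q, j, hq.prime, by omega, heq⟩
    have hmem : q ^ j ∈ Finset.Icc 1 (n - 1) := by
      rw [Finset.mem_Icc]
      have hlt : q ^ j < n := lt_of_le_of_ne (Nat.le_of_dvd (by omega) hproj) hne
      constructor
      · exact Nat.one_le_iff_ne_zero.mpr (pow_ne_zero _ hq.pos.ne')
      · omega
    have hdvd : q ∣ n.choose (q ^ j) := hqg.trans (Finset.gcd_dvd hmem)
    rw [← hself] at hdvd
    exact not_dvd_choose_pow_mul hq hcompl hdvd
end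

section
/- If A and B are compact convex sets in ℝᵈ such that A ∩ B has nonempty interior, and (A_k), (B_k) are sequences of compact convex sets converging in the Hausdorff metric to A and B respectively, then A_k ∩ B_k converges to A ∩ B in the Hausdorff metric. -/
open Metric Filter RealInnerProductSpace

lemma sep_lemma {E : Type*} [NormedAddCommGroup E] [InnerProductSpace ℝ E]
    {C : Set E} (hC : Convex ℝ C) (hCc : IsCompact C) (hCne : C.Nonempty)
    {y : E} {ρ ε : ℝ} (hε0 : 0 ≤ ε) (hε : ε < ρ)
    (h : ∀ z ∈ closedBall y ρ, infDist z C ≤ ε) : y ∈ C := by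
  have hρ : 0 < ρ := hε0.trans_lt hε
  by_contra hy
  obtain ⟨p, hpC, hdp⟩ := hCc.exists_infDist_eq_dist hCne y
  have hδ : 0 < dist y p := hdp ▸ (hCc.isClosed.notMem_iff_infDist_pos hCne).1 hy
  have hnorm : ‖y - p‖ = dist y p := (dist_eq_norm y p).symm
  have key : ∀ w ∈ C, ⟪y - p, w - p⟫ ≤ 0 := by
    rw [← norm_eq_iInf_iff_real_inner_le_zero hC hpC, hnorm, ← hdp, infDist_eq_iInf]
    exact iInf_congr fun w => dist_eq_norm _ _
  set z := y + (ρ * (dist y p)⁻¹) • (y - p) with hzdef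
  have hz : z ∈ closedBall y ρ := by
    simp only [mem_closedBall, hzdef, dist_self_add_left, norm_smul, Real.norm_eq_abs, hnorm]
    rw [abs_of_pos (by positivity)]
    field_simp
    exact le_rfl
  obtain ⟨c, hcC, hdc⟩ := hCc.exists_infDist_eq_dist hCne z
  have h1 : dist z c ≤ ε := hdc ▸ h z hz
  have h2 : ⟪y - p, c - p⟫ ≤ 0 := key c hcC
  have h3 : ⟪y - p, z - c⟫ ≤ dist y p * ε := by
    calc ⟪y - p, z - c⟫ ≤ ‖y - p‖ * ‖z - c‖ := real_inner_le_norm _ _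
    _ ≤ dist y p * ε := by
        rw [hnorm]
        exact mul_le_mul_of_nonneg_left (by rw [← dist_eq_norm]; exact h1) hδ.le
  have h4 : ⟪y - p, z - p⟫ = dist y p ^ 2 + ρ * dist y p := by
    have hzp : z - p = (1 + ρ * (dist y p)⁻¹) • (y - p) := by rw [hzdef]; module
    rw [hzp, real_inner_smul_right, real_inner_self_eq_norm_sq, hnorm]
    field_simp
  have h5 : ⟪y - p, z - p⟫ = ⟪y - p, z - c⟫ + ⟪y - p, c - p⟫ := by
    rw [← inner_add_right]; congr 1; abel
  nlinarith


lemma push_mem {E : Type*} [NormedAddCommGroup E] [InnerProductSpace ℝ E]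
    {C : Set E} (hC : Convex ℝ C) {x₀ x : E} {r t : ℝ}
    (ht0 : 0 < t) (ht1 : t ≤ 1) (hball : closedBall x₀ r ⊆ C) (hx : x ∈ C) :
    closedBall (x + t • (x₀ - x)) (t * r) ⊆ C := by
  intro w hw
  have hr : 0 ≤ r := by
    by_contra hr
    have : t * r < 0 := mul_neg_of_pos_of_neg ht0 (lt_of_not_ge hr)
    exact absurd (mem_closedBall.1 hw) (not_le.2 (lt_of_lt_of_le this dist_nonneg))
  set v := w - (x + t • (x₀ - x)) with hvdef
  have hz : x₀ + t⁻¹ • v ∈ closedBall x₀ r := by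
    simp only [mem_closedBall, dist_self_add_left, norm_smul, Real.norm_eq_abs,
      abs_of_pos (inv_pos.2 ht0)]
    have hv : ‖v‖ ≤ t * r := by rw [hvdef, ← dist_eq_norm]; exact mem_closedBall.1 hw
    calc t⁻¹ * ‖v‖ ≤ t⁻¹ * (t * r) := mul_le_mul_of_nonneg_left hv (inv_pos.2 ht0).le
      _ = r := by field_simp
  have hmem : (1 - t) • x + t • (x₀ + t⁻¹ • v) ∈ C :=
    hC hx (hball hz) (by linarith) ht0.le (by ring)
  have heq : (1 - t) • x + t • (x₀ + t⁻¹ • v) = w := by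
    rw [smul_add, smul_inv_smul₀ ht0.ne', hvdef]
    module
  rwa [heq] at hmem

lemma pull_mem {E : Type*} [NormedAddCommGroup E] [InnerProductSpace ℝ E]
    {C : Set E} (hC : Convex ℝ C) {x₀ a x : E} {r lam : ℝ}
    (hball : closedBall x₀ r ⊆ C) (ha : a ∈ C) (hlam0 : 0 < lam) (hlam1 : lam ≤ 1)
    (hd : (1 - lam) / lam * dist x a ≤ r) :
    x + lam • (x₀ - x) ∈ C := by
  have hz : x₀ + ((1 - lam) / lam) • (x - a) ∈ closedBall x₀ r := by
    have h0 : (0:ℝ) ≤ (1 - lam) / lam := div_nonneg (by linarith) hlam0.le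
    simp only [mem_closedBall, dist_self_add_left, norm_smul, Real.norm_eq_abs]
    rw [abs_of_nonneg h0]
    rwa [← dist_eq_norm x a]
  have hmem : (1 - lam) • a + lam • (x₀ + ((1 - lam) / lam) • (x - a)) ∈ C :=
    hC ha (hball hz) (by linarith) hlam0.le (by ring)
  have heq : (1 - lam) • a + lam • (x₀ + ((1 - lam) / lam) • (x - a)) = x + lam • (x₀ - x) := by
    rw [smul_add, smul_smul, mul_div_cancel₀ _ hlam0.ne']
    module
  rwa [heq] at hmem

/-- If `A ∩ B` has nonempty interior and sequences of compact convex sets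
`Aₖ → A`, `Bₖ → B` in the Hausdorff metric, then `Aₖ ∩ Bₖ → A ∩ B`. -/
theorem hausdorff_convergence_of_inter {d : ℕ}
    (A B : Set (EuclideanSpace ℝ (Fin d)))
    (hA : IsCompact A) (hAc : Convex ℝ A) (hAne : A.Nonempty)
    (hB : IsCompact B) (hBc : Convex ℝ B) (hBne : B.Nonempty)
    (hint : (interior (A ∩ B)).Nonempty)
    (Ak Bk : ℕ → Set (EuclideanSpace ℝ (Fin d)))
    (hAk : ∀ k, IsCompact (Ak k) ∧ Convex ℝ (Ak k) ∧ (Ak k).Nonempty)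
    (hBk : ∀ k, IsCompact (Bk k) ∧ Convex ℝ (Bk k) ∧ (Bk k).Nonempty)
    (hAconv : Tendsto (fun k => hausdorffDist (Ak k) A) atTop (nhds 0))
    (hBconv : Tendsto (fun k => hausdorffDist (Bk k) B) atTop (nhds 0)) :
    Tendsto (fun k => hausdorffDist (Ak k ∩ Bk k) (A ∩ B)) atTop (nhds 0) := by
  obtain ⟨x₀, hx₀⟩ := hint
  have hx₀AB : x₀ ∈ A ∩ B := interior_subset hx₀
  obtain ⟨r0, hr0, hball0⟩ := Metric.isOpen_iff.1 isOpen_interior x₀ hx₀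
  set r := r0 / 2 with hrdef
  have hr : 0 < r := by rw [hrdef]; linarith
  have hball : closedBall x₀ r ⊆ A ∩ B := fun z hz =>
    interior_subset (hball0 (mem_ball.2 (lt_of_le_of_lt (mem_closedBall.1 hz) (by rw [hrdef]; linarith))))
  have hballA : closedBall x₀ r ⊆ A := fun w hw => (hball hw).1
  have hballB : closedBall x₀ r ⊆ B := fun w hw => (hball hw).2
  obtain ⟨M0, hM0⟩ := (hA.union hB).isBounded.subset_closedBall x₀
  set M := max M0 0 with hMdef
  have hMnn : 0 ≤ M := le_max_right _ _
  have hMA : ∀ y ∈ A, dist y x₀ ≤ M := fun y hy =>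
    le_trans (mem_closedBall.1 (hM0 (Or.inl hy))) (le_max_left _ _)
  have hMB : ∀ y ∈ B, dist y x₀ ≤ M := fun y hy =>
    le_trans (mem_closedBall.1 (hM0 (Or.inr hy))) (le_max_left _ _)
  rw [Metric.tendsto_atTop]
  intro ε hε
  set t := min 1 (ε / (2 * (M + 1))) with htdef
  have ht0 : 0 < t := lt_min one_pos (by positivity)
  have ht1 : t ≤ 1 := min_le_left _ _
  have htM : t * M ≤ ε / 2 := by
    calc t * M ≤ ε / (2 * (M + 1)) * M :=
          mul_le_mul_of_nonneg_right (min_le_right _ _) hMnn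
      _ ≤ ε / 2 := by
          rw [div_mul_eq_mul_div, div_le_div_iff₀ (by positivity) (by norm_num)]
          nlinarith
  set ε₀ := min (t * r / 2) (min 1 (ε * r / (2 * (M + 1)))) with hε₀def
  have hε₀pos : 0 < ε₀ := lt_min (by positivity) (lt_min one_pos (by positivity))
  have hε₀tr : ε₀ < t * r := lt_of_le_of_lt (min_le_left _ _) (by nlinarith)
  have hε₀1 : ε₀ ≤ 1 := le_trans (min_le_right _ _) (min_le_left _ _)
  have hε₀ε : ε₀ ≤ ε * r / (2 * (M + 1)) := le_trans (min_le_right _ _) (min_le_right _ _)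
  clear_value r M t ε₀
  clear hrdef hMdef htdef hε₀def
  have hevA : ∀ᶠ k in atTop, hausdorffDist (Ak k) A < ε₀ := hAconv.eventually (gt_mem_nhds hε₀pos)
  have hevB : ∀ᶠ k in atTop, hausdorffDist (Bk k) B < ε₀ := hBconv.eventually (gt_mem_nhds hε₀pos)
  obtain ⟨N, hN⟩ := eventually_atTop.1 (hevA.and hevB)
  refine ⟨N, fun k hk => ?_⟩
  obtain ⟨hdA, hdB⟩ := hN k hk
  obtain ⟨hAkc, hAkconv, hAkne⟩ := hAk k
  obtain ⟨hBkc, hBkconv, hBkne⟩ := hBk k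
  have hfinA : EMetric.hausdorffEdist A (Ak k) ≠ ⊤ :=
    hausdorffEdist_ne_top_of_nonempty_of_bounded hAne hAkne hA.isBounded hAkc.isBounded
  have hfinB : EMetric.hausdorffEdist B (Bk k) ≠ ⊤ :=
    hausdorffEdist_ne_top_of_nonempty_of_bounded hBne hBkne hB.isBounded hBkc.isBounded
  have hfinA' : EMetric.hausdorffEdist (Ak k) A ≠ ⊤ := by rwa [EMetric.hausdorffEdist, EMetric.hausdorffEdist_comm] at hfinA
  have hfinB' : EMetric.hausdorffEdist (Bk k) B ≠ ⊤ := by rwa [EMetric.hausdorffEdist, EMetric.hausdorffEdist_comm] at hfinB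
  have hpush : ∀ x ∈ A ∩ B, x + t • (x₀ - x) ∈ Ak k ∩ Bk k := by
    intro x hx
    constructor
    · refine sep_lemma hAkconv hAkc hAkne hε₀pos.le hε₀tr (fun z hz => ?_)
      have hzA : z ∈ A := push_mem hAc ht0 ht1 hballA hx.1 hz
      calc infDist z (Ak k) ≤ hausdorffDist A (Ak k) := infDist_le_hausdorffDist_of_mem hzA hfinA
        _ = hausdorffDist (Ak k) A := hausdorffDist_comm
        _ ≤ ε₀ := hdA.le
    · refine sep_lemma hBkconv hBkc hBkne hε₀pos.le hε₀tr (fun z hz => ?_)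
      have hzB : z ∈ B := push_mem hBc ht0 ht1 hballB hx.2 hz
      calc infDist z (Bk k) ≤ hausdorffDist B (Bk k) := infDist_le_hausdorffDist_of_mem hzB hfinB
        _ = hausdorffDist (Bk k) B := hausdorffDist_comm
        _ ≤ ε₀ := hdB.le
  have hdistpt : ∀ (x : EuclideanSpace ℝ (Fin d)) (c : ℝ), 0 < c →
      dist x (x + c • (x₀ - x)) = c * dist x₀ x := by
    intro x c hc
    rw [dist_self_add_right, norm_smul, Real.norm_eq_abs, abs_of_pos hc, ← dist_eq_norm]
  have dir2 : ∀ x ∈ A ∩ B, infDist x (Ak k ∩ Bk k) ≤ ε / 2 := by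
    intro x hx
    refine le_trans (infDist_le_dist_of_mem (hpush x hx)) ?_
    rw [hdistpt x t ht0]
    have hdx : dist x₀ x ≤ M := by rw [dist_comm]; exact hMA x hx.1
    calc t * dist x₀ x ≤ t * M := mul_le_mul_of_nonneg_left hdx ht0.le
      _ ≤ ε / 2 := htM
  have dir1 : ∀ x ∈ Ak k ∩ Bk k, infDist x (A ∩ B) ≤ ε / 2 := by
    intro x hx
    obtain ⟨a, haA, hxa⟩ := exists_dist_lt_of_hausdorffDist_lt hx.1 hdA hfinA'
    obtain ⟨b, hbB, hxb⟩ := exists_dist_lt_of_hausdorffDist_lt hx.2 hdB hfinB'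
    set lam := ε₀ / (ε₀ + r) with hlamdef
    have hlam0 : 0 < lam := by positivity
    have hlam1 : lam ≤ 1 := by rw [hlamdef, div_le_one (by positivity)]; linarith
    have hratio : (1 - lam) / lam = r / ε₀ := by
      rw [hlamdef]; field_simp
      ring
    have hlamle : lam * (M + ε₀) ≤ ε / 2 := by
      rw [hlamdef, div_mul_eq_mul_div, div_le_iff₀ (by positivity)]
      have h1 : ε₀ * (M + ε₀) ≤ ε₀ * (M + 1) := by nlinarith
      have h2 : ε₀ * (M + 1) ≤ ε * r / 2 := by
        have h := mul_le_mul_of_nonneg_right hε₀ε (by linarith : (0:ℝ) ≤ M + 1)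
        rw [div_mul_eq_mul_div, le_div_iff₀ (by positivity)] at h
        nlinarith
      have h3 : (0:ℝ) ≤ ε / 2 * ε₀ := by positivity
      nlinarith
    clear_value lam
    clear hlamdef
    have hmemA : x + lam • (x₀ - x) ∈ A := by
      refine pull_mem hAc hballA haA hlam0 hlam1 ?_
      rw [hratio]
      calc r / ε₀ * dist x a ≤ r / ε₀ * ε₀ := mul_le_mul_of_nonneg_left hxa.le (by positivity)
        _ = r := by field_simp
    have hmemB : x + lam • (x₀ - x) ∈ B := by
      refine pull_mem hBc hballB hbB hlam0 hlam1 ?_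
      rw [hratio]
      calc r / ε₀ * dist x b ≤ r / ε₀ * ε₀ := mul_le_mul_of_nonneg_left hxb.le (by positivity)
        _ = r := by field_simp
    refine le_trans (infDist_le_dist_of_mem ⟨hmemA, hmemB⟩) ?_
    rw [hdistpt x lam hlam0]
    have hdx : dist x₀ x ≤ M + ε₀ := by
      calc dist x₀ x ≤ dist x₀ a + dist a x := dist_triangle _ _ _
        _ ≤ M + ε₀ := by
            rw [dist_comm x₀ a, dist_comm a x]
            exact add_le_add (hMA a haA) hxa.le
    calc lam * dist x₀ x ≤ lam * (M + ε₀) :=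
          mul_le_mul_of_nonneg_left hdx hlam0.le
      _ ≤ ε / 2 := hlamle
  have hdle : hausdorffDist (Ak k ∩ Bk k) (A ∩ B) ≤ ε / 2 :=
    hausdorffDist_le_of_infDist (by positivity) dir1 dir2
  rw [Real.dist_0_eq_abs, abs_of_nonneg hausdorffDist_nonneg]
  linarith
end

section
/- Suppose for every prime power n = pᵏ and every family of continuous Hausdorff-metric functionals there exists an equipartition of any nice measure on ℝᵈ into n convex pieces equalizing d−1 additional functionals obtained by restricting and renormalizing measures. Then for every positive integer n and nice probability measures μ₀, μ₁, …, μ_{d−1} on ℝᵈ there is a partition of ℝᵈ into n convex regions K₁,…,Kₙ with μᵢ(Kⱼ) = 1/n for all 0 ≤ i ≤ d−1 and 1 ≤ j ≤ n. -/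
open MeasureTheory Filter
open scoped ENNReal

/-- A measure has a (finite) second moment. -/
def HasSecondMoment {d : ℕ} (μ : Measure (EuclideanSpace ℝ (Fin d))) : Prop :=
  ∫⁻ x, (‖x‖₊ : ℝ≥0∞) ^ 2 ∂μ < ⊤

/-- A *nice* measure on `ℝᵈ`: every affine hyperplane has measure zero, and the
measure is a weak limit of absolutely continuous measures with second moment. -/
def IsNiceMeasure {d : ℕ} (μ : Measure (EuclideanSpace ℝ (Fin d))) : Prop :=
  (∀ H : AffineSubspace ℝ (EuclideanSpace ℝ (Fin d)),
      Module.finrank ℝ H.direction = d - 1 →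
      μ (H : Set (EuclideanSpace ℝ (Fin d))) = 0) ∧
  ∃ ν : ℕ → Measure (EuclideanSpace ℝ (Fin d)),
    (∀ k, ν k ≪ (volume : Measure (EuclideanSpace ℝ (Fin d))) ∧ HasSecondMoment (ν k)) ∧
    ∀ g : EuclideanSpace ℝ (Fin d) → ℝ, Continuous g → (∃ C, ∀ x, |g x| ≤ C) →
      Tendsto (fun k => ∫ x, g x ∂(ν k)) atTop (nhds (∫ x, g x ∂μ))

/-- A partition of `ℝᵈ` into `n` convex regions: convex sets covering `ℝᵈ`
with pairwise disjoint interiors. -/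
def IsConvexPartition {d n : ℕ} (K : Fin n → Set (EuclideanSpace ℝ (Fin d))) : Prop :=
  (∀ j, Convex ℝ (K j)) ∧ (⋃ j, K j) = Set.univ ∧
    Pairwise fun j j' => interior (K j) ∩ interior (K j') = ∅

lemma exists_weakApprox {d : ℕ} (μ : Measure (EuclideanSpace ℝ (Fin d)))
    [IsFiniteMeasure μ] :
    ∃ ν : ℕ → Measure (EuclideanSpace ℝ (Fin d)),
      (∀ k, ν k ≪ (volume : Measure (EuclideanSpace ℝ (Fin d))) ∧ HasSecondMoment (ν k)) ∧
      ∀ g : EuclideanSpace ℝ (Fin d) → ℝ, Continuous g → (∃ C, ∀ x, |g x| ≤ C) →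
        Tendsto (fun k => ∫ x, g x ∂(ν k)) atTop (nhds (∫ x, g x ∂μ)) := by
  set E := EuclideanSpace ℝ (Fin d)
  set r : ℕ → ℝ := fun k => ((k : ℝ) + 1)⁻¹ with hr
  have hr_pos : ∀ k, 0 < r k := fun k => by positivity
  have hr_le_one : ∀ k, r k ≤ 1 := by
    intro k
    rw [hr]
    rw [inv_le_one_iff₀]
    right; linarith [Nat.cast_nonneg (α := ℝ) k]
  set bl : ℕ → Set E := fun k => Metric.ball (0 : E) (r k) with hbl
  set B : ℕ → Set E := fun k => Metric.closedBall (0 : E) k with hB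
  have hv0 : ∀ k, volume (bl k) ≠ 0 :=
    fun k => (Metric.measure_ball_pos volume _ (hr_pos k)).ne'
  have hvt : ∀ k, volume (bl k) ≠ ⊤ := fun k => measure_ball_lt_top.ne
  set c : ℕ → ℝ≥0∞ := fun k => (volume (bl k))⁻¹ with hc
  set G : ℕ → Measure E := fun k => c k • volume.restrict (bl k) with hG
  have hGprob : ∀ k, IsProbabilityMeasure (G k) := by
    intro k
    constructor
    rw [hG]
    simp only [Measure.smul_apply, Measure.restrict_apply_univ, smul_eq_mul]
    exact ENNReal.inv_mul_cancel (hv0 k) (hvt k)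
  set ρ : ℕ → Measure E := fun k => μ.restrict (B k) with hρ
  have hρfin : ∀ k, IsFiniteMeasure (ρ k) := fun k => inferInstance
  set ν : ℕ → Measure E :=
    fun k => Measure.map (fun p : E × E => p.1 + p.2) ((ρ k).prod (G k)) with hν
  have hGae : ∀ k, ∀ᵐ y ∂(G k), y ∈ bl k := by
    intro k
    exact Measure.ae_smul_measure (ae_restrict_mem Metric.isOpen_ball.measurableSet) (c k)
  -- the inner mollified function
  set h : ℕ → (E → ℝ) → E → ℝ := fun k g x => ∫ y, g (x + y) ∂(G k) with hh
  refine ⟨ν, fun k => ⟨?_, ?_⟩, ?_⟩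
  · -- absolute continuity
    haveI : IsProbabilityMeasure (G k) := hGprob k
    refine Measure.AbsolutelyContinuous.mk fun s hs hs0 => ?_
    rw [hν]
    simp only []
    rw [Measure.map_apply measurable_add hs, Measure.prod_apply (measurable_add hs)]
    have hz : ∀ x : E, G k (Prod.mk x ⁻¹' ((fun p : E × E => p.1 + p.2) ⁻¹' s)) = 0 := by
      intro x
      have hpre : (Prod.mk x ⁻¹' ((fun p : E × E => p.1 + p.2) ⁻¹' s))
          = (fun y => x + y) ⁻¹' s := rfl
      rw [hpre, hG]
      simp only [Measure.smul_apply, smul_eq_mul]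
      have h1 : volume ((fun y => x + y) ⁻¹' s) = 0 := by
        rw [measure_preimage_add]; exact hs0
      have h2 : volume.restrict (bl k) ((fun y => x + y) ⁻¹' s) = 0 :=
        le_antisymm ((Measure.le_iff'.1 Measure.restrict_le_self _).trans h1.le) zero_le
      rw [h2, mul_zero]
    exact (lintegral_congr fun x => hz x).trans lintegral_zero
  · -- second moment
    haveI : IsProbabilityMeasure (G k) := hGprob k
    have hmap : ∫⁻ x, (‖x‖₊ : ℝ≥0∞) ^ 2 ∂(ν k)
        = ∫⁻ p : E × E, (‖p.1 + p.2‖₊ : ℝ≥0∞) ^ 2 ∂((ρ k).prod (G k)) := by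
      rw [hν]
      exact lintegral_map ((measurable_nnnorm.coe_nnreal_ennreal).pow_const 2) measurable_add
    have hprodre : (ρ k).prod (G k) = (μ.prod (c k • volume)).restrict ((B k) ×ˢ (bl k)) := by
      show (μ.restrict (B k)).prod (c k • volume.restrict (bl k))
          = (μ.prod (c k • volume)).restrict ((B k) ×ˢ (bl k))
      rw [← Measure.restrict_smul, Measure.prod_restrict]
    have hbound : ∀ p ∈ (B k) ×ˢ (bl k),
        (‖p.1 + p.2‖₊ : ℝ≥0∞) ^ 2 ≤ (ENNReal.ofReal ((k : ℝ) + 1)) ^ 2 := by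
      rintro ⟨x, y⟩ ⟨hx, hy⟩
      have hxn : ‖x‖ ≤ (k : ℝ) := by
        simpa [hB, Metric.mem_closedBall, dist_eq_norm] using hx
      have hyn : ‖y‖ ≤ 1 := by
        have : ‖y‖ < r k := by simpa [hbl, Metric.mem_ball, dist_eq_norm] using hy
        linarith [hr_le_one k]
      have : (‖x + y‖₊ : ℝ≥0∞) ≤ ENNReal.ofReal ((k : ℝ) + 1) := by
        rw [← enorm_eq_nnnorm, ← ofReal_norm]
        exact ENNReal.ofReal_le_ofReal ((norm_add_le x y).trans (by linarith))
      exact pow_le_pow_left₀ zero_le this 2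
    rw [HasSecondMoment, hmap, hprodre]
    have hTmeas : MeasurableSet ((B k) ×ˢ (bl k)) :=
      (measurableSet_closedBall).prod Metric.isOpen_ball.measurableSet
    calc ∫⁻ p in (B k) ×ˢ (bl k), (‖p.1 + p.2‖₊ : ℝ≥0∞) ^ 2 ∂(μ.prod (c k • volume))
        ≤ ∫⁻ _ in (B k) ×ˢ (bl k), (ENNReal.ofReal ((k : ℝ) + 1)) ^ 2 ∂(μ.prod (c k • volume)) := by
          refine lintegral_mono_ae ?_
          exact (ae_restrict_iff' hTmeas).2 (Eventually.of_forall hbound)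
      _ = (ENNReal.ofReal ((k : ℝ) + 1)) ^ 2 * (μ.prod (c k • volume)) ((B k) ×ˢ (bl k)) := by
          rw [setLIntegral_const]
      _ < ⊤ := by
          rw [Measure.prod_prod]
          refine ENNReal.mul_lt_top (ENNReal.pow_lt_top ENNReal.ofReal_lt_top) ?_
          refine ENNReal.mul_lt_top (measure_lt_top _ _) ?_
          have h9 : (c k • (volume : Measure E)) (bl k) = 1 := by
            show c k * volume (bl k) = 1
            exact ENNReal.inv_mul_cancel (hv0 k) (hvt k)
          rw [h9]; exact ENNReal.one_lt_top
  · -- weak convergence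
    rintro g hg ⟨C, hC⟩
    have hgs : StronglyMeasurable fun p : E × E => g (p.1 + p.2) :=
      (hg.comp (continuous_fst.add continuous_snd)).stronglyMeasurable
    have hint : ∀ k, Integrable (fun p : E × E => g (p.1 + p.2)) ((ρ k).prod (G k)) := by
      intro k
      haveI : IsProbabilityMeasure (G k) := hGprob k
      refine Integrable.mono' (integrable_const C) hgs.aestronglyMeasurable ?_
      filter_upwards with p
      rw [Real.norm_eq_abs]; exact hC _
    have hkey : ∀ k, ∫ x, g x ∂(ν k) = ∫ x, (B k).indicator (h k g) x ∂μ := by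
      intro k
      haveI : IsProbabilityMeasure (G k) := hGprob k
      rw [hν]
      simp only []
      rw [integral_map measurable_add.aemeasurable
        (hg.aestronglyMeasurable), integral_prod _ (hint k)]
      rw [hρ]
      simp only []
      rw [← integral_indicator measurableSet_closedBall]
    have hbnd : ∀ k x, ‖h k g x‖ ≤ C := by
      intro k x
      haveI : IsProbabilityMeasure (G k) := hGprob k
      have := norm_integral_le_of_norm_le_const (μ := G k)
        (f := fun y => g (x + y)) (C := C) (Eventually.of_forall fun y => by
          rw [Real.norm_eq_abs]; exact hC _)
      simpa using this
    have hpt : ∀ x, Tendsto (fun k => h k g x) atTop (nhds (g x)) := by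
      intro x
      rw [Metric.tendsto_atTop]
      intro ε hε
      obtain ⟨δ, hδ, hδ'⟩ := Metric.continuousAt_iff.1 hg.continuousAt (ε / 2) (by linarith)
      obtain ⟨N, hN⟩ := exists_nat_gt (1 / δ)
      refine ⟨N, fun k hk => ?_⟩
      haveI : IsProbabilityMeasure (G k) := hGprob k
      have hrlt : r k < δ := by
        rw [hr]
        have h1 : (1 : ℝ) / δ < (k : ℝ) + 1 := by
          calc (1 : ℝ) / δ < N := hN
            _ ≤ k := by exact_mod_cast hk
            _ < k + 1 := by linarith
        have h2 := one_div_lt_one_div_of_lt (by positivity : (0:ℝ) < 1/δ) h1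
        rwa [one_div_one_div, one_div] at h2
      have hsub : ∀ᵐ y ∂(G k), ‖g (x + y) - g x‖ ≤ ε / 2 := by
        filter_upwards [hGae k] with y hy
        have : dist (x + y) x < δ := by
          rw [dist_eq_norm]
          simp only [add_sub_cancel_left]
          calc ‖y‖ < r k := by simpa using (show dist y 0 < r k from hy)
            _ < δ := hrlt
        rw [Real.norm_eq_abs, ← Real.dist_eq]
        exact (hδ' this).le
      have hI1 : Integrable (fun y => g (x + y)) (G k) := by
        refine Integrable.mono' (integrable_const C)
          ((hg.comp (continuous_const.add continuous_id)).aestronglyMeasurable) ?_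
        filter_upwards with y; rw [Real.norm_eq_abs]; exact hC _
      have : dist (h k g x) (g x) ≤ ε / 2 := by
        rw [dist_eq_norm, hh]
        simp only []
        have hconst : ∫ _y, g x ∂(G k) = g x := by simp
        rw [← hconst, ← integral_sub hI1 (integrable_const _)]
        have := norm_integral_le_of_norm_le_const (μ := G k)
          (f := fun y => g (x + y) - g x) (C := ε / 2) hsub
        simpa using this
      linarith [this]
    have hmes : ∀ k, AEStronglyMeasurable ((B k).indicator (h k g)) μ := by
      intro k
      exact ((hgs.integral_prod_right').indicator
        measurableSet_closedBall).aestronglyMeasurable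
    have hdom : Tendsto (fun k => ∫ x, (B k).indicator (h k g) x ∂μ) atTop
        (nhds (∫ x, g x ∂μ)) := by
      refine tendsto_integral_of_dominated_convergence (fun _ => C) hmes
        (integrable_const C) (fun k => ?_) ?_
      · filter_upwards with x
        by_cases hx : x ∈ B k
        · rw [Set.indicator_of_mem hx]; exact hbnd k x
        · rw [Set.indicator_of_notMem hx]
          simp only [norm_zero]
          exact (abs_nonneg (g x)).trans (hC x)
      · filter_upwards with x
        have hev : ∀ᶠ k in atTop, (B k).indicator (h k g) x = h k g x := by
          filter_upwards [eventually_ge_atTop ⌈‖x‖⌉₊] with k hk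
          refine Set.indicator_of_mem ?_ _
          rw [hB]
          simp only [Metric.mem_closedBall, dist_zero_right]
          calc ‖x‖ ≤ ⌈‖x‖⌉₊ := Nat.le_ceil _
            _ ≤ k := by exact_mod_cast hk
        exact (hpt x).congr' (hev.mono fun k hk => hk.symm)
    refine hdom.congr fun k => (hkey k).symm

/-- Reduction of the generalized Ham Sandwich theorem (the Kaneko–Kano
conjecture) to the prime-power equipartition theorem: if every `d`-tuple of
nice probability measures admits a simultaneous equipartition into `pᵏ` convex
regions for every prime power `pᵏ`, then such an equipartition exists into `n`
convex regions for every positive integer `n`. -/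
theorem hamSandwich_of_primePow_equipartition (d : ℕ)
    (hyp : ∀ p k : ℕ, p.Prime → 1 ≤ k →
      ∀ ν : Fin d → Measure (EuclideanSpace ℝ (Fin d)),
        (∀ i, IsNiceMeasure (ν i)) → (∀ i, IsProbabilityMeasure (ν i)) →
        ∃ K : Fin (p ^ k) → Set (EuclideanSpace ℝ (Fin d)),
          IsConvexPartition K ∧
          ∀ i j, ν i (K j) = ((p ^ k : ℕ) : ℝ≥0∞)⁻¹) :
    ∀ n : ℕ, 0 < n →
      ∀ μ : Fin d → Measure (EuclideanSpace ℝ (Fin d)),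
        (∀ i, IsNiceMeasure (μ i)) → (∀ i, IsProbabilityMeasure (μ i)) →
        ∃ K : Fin n → Set (EuclideanSpace ℝ (Fin d)),
          IsConvexPartition K ∧
          ∀ i j, μ i (K j) = ((n : ℕ) : ℝ≥0∞)⁻¹ := by
  intro n
  induction n using Nat.strong_induction_on with
  | _ n IH =>
  intro hn μ hnice hprob
  by_cases h1 : n = 1
  · subst h1
    refine ⟨fun _ => Set.univ, ⟨fun _ => convex_univ, Set.iUnion_const _, ?_⟩, ?_⟩
    · intro j j' hjj'; exact absurd (Subsingleton.elim j j') hjj'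
    · intro i j
      haveI := hprob i
      simp
  · -- n ≥ 2
    set p := n.minFac with hp'
    have hp : p.Prime := Nat.minFac_prime h1
    set α := n.factorization p with hα'
    have hα : 1 ≤ α := hp.factorization_pos_of_dvd (by omega) (Nat.minFac_dvd n)
    set m := n / p ^ α with hm'
    have hnm : p ^ α * m = n := Nat.ordProj_mul_ordCompl_eq_self n p
    have hpα1 : 1 < p ^ α := Nat.one_lt_pow (by omega) hp.one_lt
    have hm0 : 0 < m := by
      rcases Nat.eq_zero_or_pos m with h | h
      · rw [h, mul_zero] at hnm; omega
      · exact h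
    have hmn : m < n := by
      have h2 : m < p ^ α * m := (Nat.lt_mul_iff_one_lt_left hm0).2 hpα1
      omega
    obtain ⟨Kout, hKoutP, hKoutM⟩ := hyp p α hp hα μ hnice hprob
    have hpow0 : ((p ^ α : ℕ) : ℝ≥0∞) ≠ 0 := by
      exact_mod_cast (show 0 < p ^ α by omega).ne'
    have hpowt : ((p ^ α : ℕ) : ℝ≥0∞) ≠ ⊤ := ENNReal.natCast_ne_top _
    set S : Fin d → Fin (p ^ α) → Set (EuclideanSpace ℝ (Fin d)) :=
      fun i a => toMeasurable (μ i) (Kout a) with hS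
    have hSmeas : ∀ i a, MeasurableSet (S i a) := fun i a => measurableSet_toMeasurable _ _
    set μ' : Fin (p ^ α) → Fin d → Measure (EuclideanSpace ℝ (Fin d)) :=
      fun a i => ((p ^ α : ℕ) : ℝ≥0∞) • (μ i).restrict (S i a) with hμ'
    have happ : ∀ a i (t : Set (EuclideanSpace ℝ (Fin d))),
        μ' a i t = ((p ^ α : ℕ) : ℝ≥0∞) * μ i (t ∩ S i a) := by
      intro a i t
      show (((p ^ α : ℕ) : ℝ≥0∞) • (μ i).restrict (S i a)) t = _
      rw [Measure.smul_apply, smul_eq_mul, Measure.restrict_apply' (hSmeas i a)]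
    have hμ'prob : ∀ a i, IsProbabilityMeasure (μ' a i) := by
      intro a i
      constructor
      rw [happ, Set.univ_inter, hS]
      show ((p ^ α : ℕ) : ℝ≥0∞) * μ i (toMeasurable (μ i) (Kout a)) = 1
      rw [measure_toMeasurable, hKoutM i a]
      exact ENNReal.mul_inv_cancel hpow0 hpowt
    have hμ'nice : ∀ a i, IsNiceMeasure (μ' a i) := by
      intro a i
      constructor
      · intro H hH
        rw [happ]
        have h0 := (hnice i).1 H hH
        have hz : μ i ((H : Set (EuclideanSpace ℝ (Fin d))) ∩ S i a) = 0 :=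
          measure_mono_null Set.inter_subset_left h0
        rw [hz, mul_zero]
      · haveI := hμ'prob a i
        exact (exists_weakApprox (μ' a i))
    have hstep := fun a : Fin (p ^ α) => IH m hmn hm0 (μ' a) (hμ'nice a) (hμ'prob a)
    choose Kin hKinP hKinM using hstep
    -- the key measure computation
    have hm0' : ((m : ℕ) : ℝ≥0∞) ≠ 0 := by exact_mod_cast hm0.ne'
    have hmt : ((m : ℕ) : ℝ≥0∞) ≠ ⊤ := ENNReal.natCast_ne_top _
    set cst : ℝ≥0∞ := ((p ^ α : ℕ) : ℝ≥0∞)⁻¹ * ((m : ℕ) : ℝ≥0∞)⁻¹ with hcst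
    have hcstt : cst ≠ ⊤ := by
      rw [hcst]
      exact ENNReal.mul_ne_top (ENNReal.inv_ne_top.2 hpow0) (ENNReal.inv_ne_top.2 hm0')
    have hub : ∀ i a b, μ i (Kout a ∩ Kin a b) ≤ cst := by
      intro i a b
      have h2 : ((p ^ α : ℕ) : ℝ≥0∞) * μ i (Kin a b ∩ S i a) = ((m : ℕ) : ℝ≥0∞)⁻¹ := by
        rw [← happ]; exact hKinM a i b
      have h3 : μ i (Kin a b ∩ S i a) = cst := by
        rw [hcst, ← h2, ← mul_assoc, ENNReal.inv_mul_cancel hpow0 hpowt, one_mul]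
      refine le_trans (measure_mono ?_) h3.le
      intro x hx
      exact ⟨hx.2, subset_toMeasurable _ _ hx.1⟩
    have heq : ∀ i a b, μ i (Kout a ∩ Kin a b) = cst := by
      intro i a b
      refine le_antisymm (hub i a b) ?_
      have hcover : Kout a ⊆ ⋃ b', (Kout a ∩ Kin a b') := by
        intro x hx
        have h2 : x ∈ ⋃ b', Kin a b' := by rw [(hKinP a).2.1]; trivial
        obtain ⟨b', hb'⟩ := Set.mem_iUnion.1 h2
        exact Set.mem_iUnion.2 ⟨b', hx, hb'⟩
      have hsum : ((p ^ α : ℕ) : ℝ≥0∞)⁻¹ ≤ ∑ b', μ i (Kout a ∩ Kin a b') := by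
        rw [← hKoutM i a]
        exact (measure_mono hcover).trans (measure_iUnion_fintype_le _ _)
      have hsplit : ∑ b', μ i (Kout a ∩ Kin a b')
          = μ i (Kout a ∩ Kin a b) + ∑ b' ∈ Finset.univ.erase b, μ i (Kout a ∩ Kin a b') :=
        (Finset.add_sum_erase _ _ (Finset.mem_univ b)).symm
      have htail : ∑ b' ∈ Finset.univ.erase b, μ i (Kout a ∩ Kin a b')
          ≤ (m - 1) • cst := by
        have := Finset.sum_le_card_nsmul (Finset.univ.erase b)
          (fun b' => μ i (Kout a ∩ Kin a b')) cst (fun b' _ => hub i a b')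
        rwa [Finset.card_erase_of_mem (Finset.mem_univ b), Finset.card_univ,
          Fintype.card_fin] at this
      have hA : ((p ^ α : ℕ) : ℝ≥0∞)⁻¹ = cst + (m - 1) • cst := by
        have h5 : cst + (m - 1) • cst = m • cst := by
          rw [← succ_nsmul']
          congr 1
          omega
        rw [h5, nsmul_eq_mul, hcst, ← mul_assoc, mul_comm ((m : ℕ) : ℝ≥0∞), mul_assoc,
          ENNReal.mul_inv_cancel hm0' hmt, mul_one]
      have h6 : cst + (m - 1) • cst ≤ μ i (Kout a ∩ Kin a b) + (m - 1) • cst := by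
        calc cst + (m - 1) • cst = ((p ^ α : ℕ) : ℝ≥0∞)⁻¹ := hA.symm
          _ ≤ _ := hsum
          _ = _ := hsplit
          _ ≤ _ := add_le_add le_rfl htail
      have h7 : (m - 1) • cst ≠ ⊤ := by
        rw [nsmul_eq_mul]
        exact ENNReal.mul_ne_top (ENNReal.natCast_ne_top _) hcstt
      exact (ENNReal.add_le_add_iff_right h7).1 h6
    -- assemble
    set e : Fin n ≃ Fin (p ^ α) × Fin m := (finCongr hnm.symm).trans finProdFinEquiv.symm
      with he
    refine ⟨fun j => Kout (e j).1 ∩ Kin (e j).1 (e j).2, ⟨?_, ?_, ?_⟩, ?_⟩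
    · intro j
      exact (hKoutP.1 _).inter ((hKinP _).1 _)
    · apply Set.eq_univ_of_forall
      intro x
      have h2 : x ∈ ⋃ a, Kout a := by rw [hKoutP.2.1]; trivial
      obtain ⟨a, ha⟩ := Set.mem_iUnion.1 h2
      have h3 : x ∈ ⋃ b, Kin a b := by rw [(hKinP a).2.1]; trivial
      obtain ⟨b, hb⟩ := Set.mem_iUnion.1 h3
      refine Set.mem_iUnion.2 ⟨e.symm (a, b), ?_⟩
      rw [Equiv.apply_symm_apply]
      exact ⟨ha, hb⟩
    · have key : ∀ q q' : Fin (p ^ α) × Fin m, q ≠ q' →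
          interior (Kout q.1 ∩ Kin q.1 q.2) ∩ interior (Kout q'.1 ∩ Kin q'.1 q'.2) = ∅ := by
        rintro ⟨a, b⟩ ⟨a', b'⟩ hq
        rw [interior_inter, interior_inter]
        by_cases ha : a = a'
        · subst ha
          have hb : b ≠ b' := by
            intro hbb; exact hq (by rw [hbb])
          have hin := (hKinP a).2.2 hb
          apply Set.eq_empty_of_subset_empty
          refine (Set.Subset.trans (fun x hx => ?_) hin.le)
          exact ⟨hx.1.2, hx.2.2⟩
        · have hout := hKoutP.2.2 ha
          apply Set.eq_empty_of_subset_empty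
          refine (Set.Subset.trans (fun x hx => ?_) hout.le)
          exact ⟨hx.1.1, hx.2.1⟩
      intro j j' hjj'
      exact key (e j) (e j') fun hh => hjj' (e.injective hh)
    · intro i j
      rw [heq i (e j).1 (e j).2, hcst, ← ENNReal.mul_inv (Or.inl hpow0) (Or.inl hpowt),
        ← Nat.cast_mul, hnm]
end
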